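/- For every n ≥ 2 and T ≥ 1, the number of n×n singular integer matrices with all rows primitive of Euclidean length at most T is at least c·T^{n²−n} for some constant c > 0 depending only on n. -/

import Mathlib

/-- Euclidean norm of an integer vector. -/
noncomputable def vnorm {n : ℕ} (v : Fin n → ℤ) : ℝ := Real.sqrt (∑ i, ((v i : ℝ)) ^ 2)

/-- A vector of `ℤ^n` is primitive if the gcd of its coordinates is 1. -/
def IsPrimitive {n : ℕ} (v : Fin n → ℤ) : Prop := Finset.univ.gcd v = 1

/-- `PN n T` is the number of singular n×n integer matrices all of whose rows are
primitive of Euclidean norm at most `T`. -/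
noncomputable def PN (n : ℕ) (T : ℝ) : ℕ :=
  Set.ncard {M : Matrix (Fin n) (Fin n) ℤ | M.det = 0 ∧ ∀ i, IsPrimitive (M i) ∧ vnorm (M i) ≤ T}



noncomputable def rowFinset (n K : ℕ) (h0 h1 : Fin n) : Finset (Fin n → ℤ) :=
  (Fintype.piFinset fun _ : Fin n => Finset.Icc (1:ℤ) K).filter
    fun v => Int.gcd (v h0) (v h1) = 1

lemma rowFinset_primitive {n K : ℕ} {h0 h1 : Fin n} {v : Fin n → ℤ}
    (hv : v ∈ rowFinset n K h0 h1) : IsPrimitive v := by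
  rw [rowFinset, Finset.mem_filter] at hv
  obtain ⟨-, hg⟩ := hv
  set d := Finset.univ.gcd v with hd
  have hdvd : d ∣ 1 := by
    have d0 : d ∣ v h0 := Finset.gcd_dvd (Finset.mem_univ _)
    have d1 : d ∣ v h1 := Finset.gcd_dvd (Finset.mem_univ _)
    have h2 : d ∣ ((Int.gcd (v h0) (v h1) : ℕ) : ℤ) := Int.dvd_coe_gcd d0 d1
    rw [hg] at h2
    exact_mod_cast h2
  have hnn : 0 ≤ d := by
    have := Finset.normalize_gcd (s := (Finset.univ : Finset (Fin n))) (f := v)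
    rw [← hd] at this
    exact Int.nonneg_of_normalize_eq_self this
  have := Int.isUnit_iff.mp (isUnit_of_dvd_one hdvd)
  rcases this with h | h
  · exact h
  · omega

lemma rowFinset_norm {n K : ℕ} {h0 h1 : Fin n} {v : Fin n → ℤ}
    (hv : v ∈ rowFinset n K h0 h1) : vnorm v ≤ Real.sqrt n * K := by
  rw [rowFinset, Finset.mem_filter, Fintype.mem_piFinset] at hv
  obtain ⟨hmem, -⟩ := hv
  have hbd : ∀ i, ((v i : ℝ))^2 ≤ (K:ℝ)^2 := by
    intro i
    have := hmem i
    rw [Finset.mem_Icc] at this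
    have h1 : (1:ℝ) ≤ (v i : ℝ) := by exact_mod_cast this.1
    have h2 : ((v i):ℝ) ≤ (K:ℝ) := by exact_mod_cast this.2
    nlinarith
  have : ∑ i, ((v i : ℝ))^2 ≤ (n:ℝ) * (K:ℝ)^2 := by
    calc ∑ i, ((v i : ℝ))^2 ≤ ∑ _i : Fin n, (K:ℝ)^2 := Finset.sum_le_sum fun i _ => hbd i
      _ = (n:ℝ) * (K:ℝ)^2 := by simp [mul_comm]
  calc vnorm v ≤ Real.sqrt ((n:ℝ) * (K:ℝ)^2) := Real.sqrt_le_sqrt this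
    _ = Real.sqrt n * K := by
        rw [Real.sqrt_mul (by positivity), Real.sqrt_sq (by positivity)]

lemma sum_inv_sq_aux : ∀ K : ℕ, 2 ≤ K → ∑ d ∈ Finset.Icc 2 K, ((d:ℝ)^2)⁻¹ ≤ 3/4 - 1/K := by
  intro K
  induction K with
  | zero => omega
  | succ K ih =>
    intro hK
    rcases Nat.lt_or_ge K 2 with h | h
    · interval_cases K
      · omega
      · norm_num
    · rw [Finset.sum_Icc_succ_top (by omega)]
      have h1 : (0:ℝ) < K := by positivity
      have h2 : (0:ℝ) < (K:ℝ) + 1 := by positivity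
      calc ∑ d ∈ Finset.Icc 2 K, ((d:ℝ)^2)⁻¹ + ((((K+1:ℕ)):ℝ)^2)⁻¹
          ≤ (3/4 - 1/K) + (1/K - 1/((K:ℝ)+1)) := by
            push_cast
            gcongr ?_ + ?_
            · exact ih h
            · rw [inv_le_iff_one_le_mul₀ (by positivity)]
              rw [div_sub_div _ _ (ne_of_gt h1) (ne_of_gt h2)]
              rw [div_mul_eq_mul_div, le_div_iff₀ (by positivity)]
              nlinarith
        _ = 3/4 - 1/((K:ℕ)+1:ℕ) := by push_cast; ring

lemma sum_inv_sq (K : ℕ) : ∑ d ∈ Finset.Icc 2 K, ((d:ℝ)^2)⁻¹ ≤ 3/4 := by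
  rcases Nat.lt_or_ge K 2 with h | h
  · have he : Finset.Icc 2 K = ∅ := by apply Finset.Icc_eq_empty; omega
    simp [he]; norm_num
  · have h0 : (0:ℝ) < 1/K := by positivity
    linarith [sum_inv_sq_aux K h]

-- multiples of d in [1,K]
lemma card_multiples (K d : ℕ) (hd : 2 ≤ d) :
    (((Finset.Icc (1:ℤ) K).filter fun x => (d:ℤ) ∣ x).card : ℝ) ≤ (K:ℝ) / d := by
  have hd0 : (0:ℤ) < (d:ℤ) := by exact_mod_cast Nat.lt_of_lt_of_le (by norm_num) hd
  have hsub : ((Finset.Icc (1:ℤ) K).filter fun x => (d:ℤ) ∣ x).card ≤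
      (Finset.Icc (1:ℤ) ((K:ℤ)/(d:ℤ))).card := by
    refine Finset.card_le_card_of_injOn (fun x => x / (d:ℤ)) ?_ ?_
    · intro x hx
      rw [Finset.mem_coe, Finset.mem_filter, Finset.mem_Icc] at hx
      obtain ⟨⟨hx1, hxK⟩, hdvd⟩ := hx
      rw [Finset.mem_coe, Finset.mem_Icc]
      constructor
      · obtain ⟨m, hm⟩ := hdvd
        show 1 ≤ x / (d:ℤ)
        rw [hm, Int.mul_ediv_cancel_left _ (ne_of_gt hd0)]
        nlinarith
      · exact Int.ediv_le_ediv hd0 hxK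
    · intro x hx y hy hxy
      rw [Finset.mem_coe, Finset.mem_filter] at hx hy
      obtain ⟨-, hdx⟩ := hx
      obtain ⟨-, hdy⟩ := hy
      simp only at hxy
      rw [← Int.ediv_mul_cancel hdx, ← Int.ediv_mul_cancel hdy, hxy]
  calc (((Finset.Icc (1:ℤ) K).filter fun x => (d:ℤ) ∣ x).card : ℝ)
      ≤ ((Finset.Icc (1:ℤ) ((K:ℤ)/(d:ℤ))).card : ℝ) := by exact_mod_cast hsub
    _ = ((K / d : ℕ) : ℝ) := by
        rw [Int.card_Icc]
        have : ((K:ℤ)/(d:ℤ) + 1 - 1) = ((K/d : ℕ) : ℤ) := by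
          rw [Int.natCast_ediv]; ring
        rw [this, Int.toNat_natCast]
    _ ≤ (K:ℝ) / d := Nat.cast_div_le

lemma Icc_int_card (K : ℕ) : (Finset.Icc (1:ℤ) K).card = K := by
  rw [Int.card_Icc]; omega

lemma rowFinset_card {n K : ℕ} (hn : 2 ≤ n) {h0 h1 : Fin n} (hne : h0 ≠ h1) :
    (K:ℝ)^n / 4 ≤ ((rowFinset n K h0 h1).card : ℝ) := by
  classical
  set B := Fintype.piFinset (fun _ : Fin n => Finset.Icc (1:ℤ) K) with hB
  have hBcard : B.card = K ^ n := by
    rw [hB, Fintype.card_piFinset]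
    simp [Icc_int_card]
  set p : (Fin n → ℤ) → Prop := fun v => Int.gcd (v h0) (v h1) = 1 with hp
  have hsplit : (B.filter p).card + (B.filter fun v => ¬ p v).card = K ^ n := by
    rw [← hBcard]; exact Finset.card_filter_add_card_filter_not _
  -- bad set bound
  set bad := B.filter (fun v => ¬ p v) with hbad
  have hbadsub : bad ⊆ (Finset.Icc 2 K).biUnion
      (fun d => B.filter fun v => (d:ℤ) ∣ v h0 ∧ (d:ℤ) ∣ v h1) := by
    intro v hv
    rw [hbad, Finset.mem_filter] at hv
    obtain ⟨hvB, hg⟩ := hv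
    have hmem := Fintype.mem_piFinset.mp hvB
    have h00 := Finset.mem_Icc.mp (hmem h0)
    have hg0 : Int.gcd (v h0) (v h1) ≠ 0 := by
      intro h
      rw [Int.gcd_eq_zero_iff] at h
      omega
    have hd2 : 2 ≤ Int.gcd (v h0) (v h1) := by
      have h1 : Int.gcd (v h0) (v h1) ≠ 1 := hg
      omega
    have hdK : (Int.gcd (v h0) (v h1) : ℤ) ≤ K := by
      calc (Int.gcd (v h0) (v h1) : ℤ) ≤ v h0 :=
            Int.le_of_dvd (by omega) (Int.gcd_dvd_left _ _)
        _ ≤ K := h00.2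
    rw [Finset.mem_biUnion]
    refine ⟨Int.gcd (v h0) (v h1), ?_, ?_⟩
    · rw [Finset.mem_Icc]
      exact ⟨hd2, by exact_mod_cast hdK⟩
    · rw [Finset.mem_filter]
      exact ⟨hvB, Int.gcd_dvd_left _ _, Int.gcd_dvd_right _ _⟩
  have hDcard : ∀ d ∈ Finset.Icc 2 K,
      ((B.filter fun v => (d:ℤ) ∣ v h0 ∧ (d:ℤ) ∣ v h1).card : ℝ) ≤ (K:ℝ)^n / (d:ℝ)^2 := by
    intro d hd
    rw [Finset.mem_Icc] at hd
    set Md := (Finset.Icc (1:ℤ) K).filter (fun x => (d:ℤ) ∣ x) with hMd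
    have hsub : (B.filter fun v => (d:ℤ) ∣ v h0 ∧ (d:ℤ) ∣ v h1) ⊆
        Fintype.piFinset (fun i => if i = h0 ∨ i = h1 then Md else Finset.Icc (1:ℤ) K) := by
      intro v hv
      rw [Finset.mem_filter] at hv
      obtain ⟨hvB, hdvd0, hdvd1⟩ := hv
      have hmem := Fintype.mem_piFinset.mp hvB
      rw [Fintype.mem_piFinset]
      intro i
      by_cases hi : i = h0 ∨ i = h1
      · rw [if_pos hi, hMd, Finset.mem_filter]
        refine ⟨hmem i, ?_⟩
        rcases hi with rfl | rfl
        · exact hdvd0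
        · exact hdvd1
      · rw [if_neg hi]; exact hmem i
    have hprod : (Fintype.piFinset
        (fun i => if i = h0 ∨ i = h1 then Md else Finset.Icc (1:ℤ) K)).card
        = Md.card ^ 2 * K ^ (n - 2) := by
      rw [Fintype.card_piFinset]
      have hfilter : Finset.univ.filter (fun i : Fin n => i = h0 ∨ i = h1) = {h0, h1} := by
        ext i; simp
      have hfc : (Finset.univ.filter (fun i : Fin n => i = h0 ∨ i = h1)).card = 2 := by
        rw [hfilter, Finset.card_insert_of_notMem (by simp [hne]), Finset.card_singleton]
      have hnfc : (Finset.univ.filter (fun i : Fin n => ¬ (i = h0 ∨ i = h1))).card = n - 2 := by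
        have := Finset.card_filter_add_card_filter_not
          (s := (Finset.univ : Finset (Fin n))) (p := fun i : Fin n => i = h0 ∨ i = h1)
        simp only [Finset.card_univ, Fintype.card_fin] at this
        omega
      rw [← Finset.prod_filter_mul_prod_filter_not Finset.univ (fun i => i = h0 ∨ i = h1)]
      have e1 : ∏ i ∈ Finset.univ.filter (fun i : Fin n => i = h0 ∨ i = h1),
          (if i = h0 ∨ i = h1 then Md else Finset.Icc (1:ℤ) K).card = Md.card ^ 2 := by
        rw [Finset.prod_congr rfl (fun i hi => ?_), Finset.prod_const, hfc]
        rw [Finset.mem_filter] at hi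
        rw [if_pos hi.2]
      have e2 : ∏ i ∈ Finset.univ.filter (fun i : Fin n => ¬(i = h0 ∨ i = h1)),
          (if i = h0 ∨ i = h1 then Md else Finset.Icc (1:ℤ) K).card = K ^ (n - 2) := by
        rw [Finset.prod_congr rfl (fun i hi => ?_), Finset.prod_const, hnfc]
        rw [Finset.mem_filter] at hi
        rw [if_neg hi.2, Icc_int_card]
      rw [e1, e2]
    have hMdle : (Md.card : ℝ) ≤ (K:ℝ) / d := card_multiples K d hd.1
    have hcard := Finset.card_le_card hsub
    rw [hprod] at hcard
    have hd0 : (0:ℝ) < (d:ℝ) := by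
      have h2 := hd.1
      exact_mod_cast Nat.lt_of_lt_of_le (by norm_num) h2
    calc ((B.filter fun v => (d:ℤ) ∣ v h0 ∧ (d:ℤ) ∣ v h1).card : ℝ)
        ≤ ((Md.card ^ 2 * K ^ (n - 2) : ℕ) : ℝ) := by exact_mod_cast hcard
      _ = (Md.card : ℝ)^2 * (K:ℝ)^(n-2) := by push_cast; ring
      _ ≤ ((K:ℝ)/d)^2 * (K:ℝ)^(n-2) := by
          have h1 : (Md.card : ℝ)^2 ≤ ((K:ℝ)/d)^2 :=
            pow_le_pow_left₀ (Nat.cast_nonneg _) hMdle 2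
          exact mul_le_mul_of_nonneg_right h1 (by positivity)
      _ = (K:ℝ)^n / (d:ℝ)^2 := by
          have h2 : 2 + (n - 2) = n := Nat.add_sub_cancel' hn
          have h3 : (K:ℝ)^2 * (K:ℝ)^(n-2) = (K:ℝ)^n := by
            rw [← pow_add, h2]
          rw [div_pow, div_mul_eq_mul_div]
          rw [h3]
  have hbadcard : ((bad.card : ℝ)) ≤ 3/4 * (K:ℝ)^n := by
    calc ((bad.card : ℝ))
        ≤ (((Finset.Icc 2 K).biUnion
            (fun d => B.filter fun v => (d:ℤ) ∣ v h0 ∧ (d:ℤ) ∣ v h1)).card : ℝ) := by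
          exact_mod_cast Finset.card_le_card hbadsub
      _ ≤ ∑ d ∈ Finset.Icc 2 K,
            ((B.filter fun v => (d:ℤ) ∣ v h0 ∧ (d:ℤ) ∣ v h1).card : ℝ) := by
          exact_mod_cast Finset.card_biUnion_le
      _ ≤ ∑ d ∈ Finset.Icc 2 K, (K:ℝ)^n / (d:ℝ)^2 := Finset.sum_le_sum hDcard
      _ = (K:ℝ)^n * ∑ d ∈ Finset.Icc 2 K, ((d:ℝ)^2)⁻¹ := by
          rw [Finset.mul_sum]
          exact Finset.sum_congr rfl fun d _ => by rw [div_eq_mul_inv]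
      _ ≤ (K:ℝ)^n * (3/4) :=
          mul_le_mul_of_nonneg_left (sum_inv_sq K) (by positivity)
      _ = 3/4 * (K:ℝ)^n := by ring
  have : ((rowFinset n K h0 h1).card : ℝ) + (bad.card : ℝ) = (K:ℝ)^n := by
    rw [rowFinset]
    exact_mod_cast hsplit
  linarith


lemma abs_entry_le_vnorm {n : ℕ} (v : Fin n → ℤ) (i : Fin n) : |(v i : ℝ)| ≤ vnorm v := by
  rw [vnorm, ← Real.sqrt_sq_eq_abs]
  apply Real.sqrt_le_sqrt
  exact Finset.single_le_sum (fun j _ => sq_nonneg ((v j:ℝ))) (Finset.mem_univ i)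

lemma PNset_finite (n : ℕ) (T : ℝ) :
    {M : Matrix (Fin n) (Fin n) ℤ | M.det = 0 ∧ ∀ i, IsPrimitive (M i) ∧ vnorm (M i) ≤ T}.Finite := by
  apply Set.Finite.subset (Set.Finite.pi (fun i : Fin n => Set.Finite.pi
    (fun j : Fin n => Set.finite_Icc (-(⌈T⌉ : ℤ)) ⌈T⌉)))
  intro M hM
  obtain ⟨-, hrows⟩ := hM
  rw [Set.mem_pi]
  intro i _
  rw [Set.mem_pi]
  intro j _
  have habs : |(M i j : ℝ)| ≤ T := le_trans (abs_entry_le_vnorm (M i) j) (hrows i).2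
  rw [abs_le] at habs
  rw [Set.mem_Icc]
  constructor
  · have : -T ≤ (M i j : ℝ) := habs.1
    have h2 : (-(⌈T⌉:ℤ) : ℝ) ≤ (M i j : ℝ) := by
      push_cast
      linarith [Int.le_ceil T]
    exact_mod_cast h2
  · have h2 : (M i j : ℝ) ≤ ((⌈T⌉:ℤ) : ℝ) := le_trans habs.2 (Int.le_ceil T)
    exact_mod_cast h2

lemma PN_ge_one (n : ℕ) (hn : 2 ≤ n) (T : ℝ) (hT : 1 ≤ T) : 1 ≤ PN n T := by
  have h0 : (0:ℕ) < n := by omega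
  set i0 : Fin n := ⟨0, by omega⟩ with hi0
  set i1 : Fin n := ⟨1, by omega⟩ with hi1
  set M : Matrix (Fin n) (Fin n) ℤ := fun _ j => if j = i0 then 1 else 0 with hM
  have hmem : M ∈ {M : Matrix (Fin n) (Fin n) ℤ |
      M.det = 0 ∧ ∀ i, IsPrimitive (M i) ∧ vnorm (M i) ≤ T} := by
    refine ⟨?_, fun i => ⟨?_, ?_⟩⟩
    · apply Matrix.det_zero_of_row_eq (i := i0) (j := i1)
      · intro h
        rw [hi0, hi1, Fin.mk.injEq] at h
        omega
      · rfl
    · rw [IsPrimitive]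
      set d := Finset.univ.gcd (M i) with hd
      have hdvd : d ∣ 1 := by
        have := Finset.gcd_dvd (f := M i) (Finset.mem_univ i0)
        simpa [hM] using this
      have hnn : 0 ≤ d := by
        have := Finset.normalize_gcd (s := (Finset.univ : Finset (Fin n))) (f := M i)
        rw [← hd] at this
        exact Int.nonneg_of_normalize_eq_self this
      rcases Int.isUnit_iff.mp (isUnit_of_dvd_one hdvd) with h | h
      · exact h
      · omega
    · rw [vnorm]
      have : ∑ j, ((M i j : ℤ) : ℝ)^2 = 1 := by
        rw [hM]
        simp only [Int.cast_ite, Int.cast_one, Int.cast_zero]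
        rw [Finset.sum_congr rfl (fun j _ => by
          rw [show ((if j = i0 then (1:ℝ) else 0))^2 = if j = i0 then 1 else 0 by
            split <;> norm_num])]
        simp
      rw [this, Real.sqrt_one]
      exact hT
  have hfin := PNset_finite n T
  rw [PN]
  have : 0 < Set.ncard {M : Matrix (Fin n) (Fin n) ℤ |
      M.det = 0 ∧ ∀ i, IsPrimitive (M i) ∧ vnorm (M i) ≤ T} :=
    (Set.ncard_pos hfin).mpr ⟨M, hmem⟩
  exact this

def pmap (n : ℕ) (hn : 2 ≤ n) : Fin n → Fin (n-1) :=
  fun i => ⟨i.val - 1, by have := i.isLt; omega⟩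

def phi (n : ℕ) (hn : 2 ≤ n) (r : Fin (n-1) → (Fin n → ℤ)) :
    Matrix (Fin n) (Fin n) ℤ := fun i j => r (pmap n hn i) j

lemma phi_inj (n : ℕ) (hn : 2 ≤ n) : Function.Injective (phi n hn) := by
  intro r r' h
  funext j k
  have hj1 : (j:ℕ) + 1 < n := by have := j.isLt; omega
  have hpj : pmap n hn ⟨(j:ℕ) + 1, hj1⟩ = j := by
    apply Fin.ext
    simp [pmap]
  have h2 := congrFun (congrFun h ⟨(j:ℕ)+1, hj1⟩) k
  rw [phi] at h2
  rwa [hpj] at h2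

lemma PN_main (n : ℕ) (hn : 2 ≤ n) (T : ℝ) (K : ℕ)
    (hsqrtK : Real.sqrt n * K ≤ T) :
    ((K:ℝ)^n/4)^(n-1) ≤ (PN n T : ℝ) := by
  have i0 : Fin n := ⟨0, by omega⟩
  set h0 : Fin n := ⟨0, by omega⟩ with hh0
  set h1 : Fin n := ⟨1, by omega⟩ with hh1
  have hne : h0 ≠ h1 := by
    rw [hh0, hh1]
    intro h
    rw [Fin.mk.injEq] at h
    omega
  have hRcard := rowFinset_card (K := K) hn hne
  have hDcard : (Fintype.piFinset (fun _ : Fin (n-1) => rowFinset n K h0 h1)).card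
      = (rowFinset n K h0 h1).card ^ (n-1) := by
    rw [Fintype.card_piFinset]
    simp
  have hBfcard : ((Fintype.piFinset (fun _ : Fin (n-1) => rowFinset n K h0 h1)).image
      (phi n hn)).card = (rowFinset n K h0 h1).card ^ (n-1) := by
    rw [Finset.card_image_of_injective _ (phi_inj n hn), hDcard]
  have hsub : ↑((Fintype.piFinset (fun _ : Fin (n-1) => rowFinset n K h0 h1)).image
      (phi n hn)) ⊆ {M : Matrix (Fin n) (Fin n) ℤ |
      M.det = 0 ∧ ∀ i, IsPrimitive (M i) ∧ vnorm (M i) ≤ T} := by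
    intro M hM
    rw [Finset.mem_coe, Finset.mem_image] at hM
    obtain ⟨r, hr, rfl⟩ := hM
    have hrow : ∀ i : Fin n, phi n hn r i ∈ rowFinset n K h0 h1 := by
      intro i
      exact Fintype.mem_piFinset.mp hr (pmap n hn i)
    refine ⟨?_, fun i => ⟨rowFinset_primitive (hrow i),
      le_trans (rowFinset_norm (hrow i)) hsqrtK⟩⟩
    apply Matrix.det_zero_of_row_eq hne
    show phi n hn r h0 = phi n hn r h1
    have hpp : pmap n hn h0 = pmap n hn h1 := by
      apply Fin.ext
      simp [pmap, hh0, hh1]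
    funext k
    show r (pmap n hn h0) k = r (pmap n hn h1) k
    rw [hpp]
  have hPN : ((((Fintype.piFinset (fun _ : Fin (n-1) => rowFinset n K h0 h1)).image
      (phi n hn)).card : ℝ)) ≤ (PN n T : ℝ) := by
    have hle := Set.ncard_le_ncard hsub (PNset_finite n T)
    rw [Set.ncard_coe_finset] at hle
    rw [PN]
    exact_mod_cast hle
  refine le_trans ?_ hPN
  rw [hBfcard]
  push_cast
  apply pow_le_pow_left₀ (by positivity)
  exact hRcard

/-- for `n ≥ 2`, `PNₙ(T) ≫ T^(n²−n)`. -/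
theorem PN_lower_bound (n : ℕ) (hn : 2 ≤ n) :
    ∃ c : ℝ, 0 < c ∧ ∀ T : ℝ, 1 ≤ T → c * T ^ (n ^ 2 - n) ≤ (PN n T : ℝ) := by
  have hn0 : (0:ℝ) < n := by
    have : (0:ℕ) < n := by omega
    exact_mod_cast this
  have he : n^2 - n = n * (n-1) := by
    obtain ⟨m, rfl⟩ : ∃ m, n = m + 1 := ⟨n-1, by omega⟩
    have h1 : (m+1)^2 = (m+1)*m + (m+1) := by ring
    have h2 : (m+1) * (m+1-1) = (m+1)*m := by norm_num
    omega
  set c1 : ℝ := (1/((2*(n:ℝ))^n * 4))^(n-1) with hc1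
  set c2 : ℝ := 1/(n:ℝ)^(n^2-n) with hc2
  have hc1pos : 0 < c1 := by rw [hc1]; positivity
  have hc2pos : 0 < c2 := by rw [hc2]; positivity
  refine ⟨min c1 c2, lt_min hc1pos hc2pos, ?_⟩
  intro T hT
  have hT0 : (0:ℝ) ≤ T := by linarith
  have hTe0 : (0:ℝ) ≤ T ^ (n^2-n) := by positivity
  rcases le_or_gt (n:ℝ) T with hTn | hTn
  · -- main case
    set K := ⌊T/(n:ℝ)⌋₊ with hK
    have hK1 : 1 ≤ K := by
      apply Nat.le_floor
      rw [Nat.cast_one, le_div_iff₀ hn0]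
      linarith
    have hKle : (K:ℝ) ≤ T/n := Nat.floor_le (by positivity)
    have hKge : T/(2*n) ≤ (K:ℝ) := by
      have hfl : T/(n:ℝ) - 1 < (K:ℝ) := Nat.sub_one_lt_floor _
      have hK1' : (1:ℝ) ≤ (K:ℝ) := by exact_mod_cast hK1
      have hhalf : T/(2*n) = (T/n)/2 := by
        rw [div_div, mul_comm]
      rcases le_or_gt (T/(n:ℝ)) 2 with h | h
      · rw [hhalf]; linarith
      · rw [hhalf]; linarith
    have hsqrtK : Real.sqrt n * K ≤ T := by
      have h1 : Real.sqrt n ≤ n := by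
        have hn1 : (1:ℝ) ≤ (n:ℝ) := by exact_mod_cast (show 1 ≤ n by omega)
        have h2 := Real.sqrt_le_sqrt (show (n:ℝ) ≤ (n:ℝ)^2 by nlinarith)
        rwa [Real.sqrt_sq hn0.le] at h2
      have h2 : Real.sqrt n * K ≤ (n:ℝ) * (T/n) := by
        apply mul_le_mul h1 hKle (by positivity) hn0.le
      calc Real.sqrt n * K ≤ (n:ℝ) * (T/n) := h2
        _ = T := by field_simp
    have hmain := PN_main n hn T K hsqrtK
    have hchain : ((T/(2*n))^n / 4)^(n-1) ≤ ((K:ℝ)^n/4)^(n-1) := by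
      apply pow_le_pow_left₀ (by positivity)
      gcongr
    have hfinal : (min c1 c2) * T ^ (n^2-n) ≤ ((T/(2*n))^n / 4)^(n-1) := by
      have hnne : (n:ℝ) ≠ 0 := ne_of_gt hn0
      have heq : ((T/(2*n))^n / 4)^(n-1) = c1 * T ^ (n^2-n) := by
        calc ((T/(2*n))^n / 4)^(n-1)
            = ((1/((2*(n:ℝ))^n * 4)) * T^n)^(n-1) := by
              congr 1
              rw [div_pow]
              field_simp
            _ = c1 * (T^n)^(n-1) := by rw [mul_pow, hc1]
            _ = c1 * T^(n^2-n) := by rw [← pow_mul, he]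
      rw [heq]
      apply mul_le_mul_of_nonneg_right (min_le_left _ _) hTe0
    linarith
  · -- small T case
    have h1 : (1:ℕ) ≤ PN n T := PN_ge_one n hn T hT
    have h1' : (1:ℝ) ≤ (PN n T : ℝ) := by exact_mod_cast h1
    have h2 : (min c1 c2) * T ^ (n^2-n) ≤ c2 * (n:ℝ) ^ (n^2-n) := by
      apply mul_le_mul (min_le_right _ _) _ hTe0 hc2pos.le
      apply pow_le_pow_left₀ hT0 hTn.le
    have h3 : c2 * (n:ℝ) ^ (n^2-n) = 1 := by
      rw [hc2]
      field_simp
    linarith
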